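/- For positive reals x and y with x ≠ y and complex z with 0 < Re z < 2, (sin(πz/2)/π) · ∫₀^∞ λ^{-z/2}(x+λ)^{-1}(y+λ)^{-1} dλ = -(x^{-z/2} - y^{-z/2})/(x - y). -/

import Mathlib

open MeasureTheory Set Complex

noncomputable section

namespace Stmt1Aux

variable {a : ℝ} {s : ℂ}

/-- The map `u ↦ a*u/(1-u)` sends `Ioo 0 1` onto `Ioi 0`. -/
lemma image_g (ha : 0 < a) : (fun u : ℝ => a * u / (1 - u)) '' (Ioo 0 1) = Ioi 0 := by
  ext t
  constructor
  · rintro ⟨u, ⟨h0, h1⟩, rfl⟩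
    exact div_pos (mul_pos ha h0) (by linarith)
  · intro ht
    have ht' : (0:ℝ) < t := ht
    refine ⟨t / (a + t), ⟨div_pos ht' (by linarith), (div_lt_one (by linarith)).2 (by linarith)⟩, ?_⟩
    field_simp
    rw [add_sub_cancel_right, div_self ha.ne']

lemma inj_g (ha : 0 < a) : InjOn (fun u : ℝ => a * u / (1 - u)) (Ioo 0 1) := by
  intro u ⟨hu0, hu1⟩ v ⟨hv0, hv1⟩ h
  simp only at h
  have h1u : (1:ℝ) - u ≠ 0 := by linarith
  have h1v : (1:ℝ) - v ≠ 0 := by linarith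
  field_simp at h
  nlinarith [ha]

lemma deriv_g (ha : 0 < a) : ∀ u ∈ Ioo (0:ℝ) 1,
    HasDerivWithinAt (fun u : ℝ => a * u / (1 - u)) (a / (1 - u) ^ 2) (Ioo 0 1) u := by
  intro u ⟨hu0, hu1⟩
  have h1u : (1:ℝ) - u ≠ 0 := by linarith
  have hd : HasDerivAt (fun u : ℝ => a * u / (1 - u)) (a / (1 - u) ^ 2) u := by
    have h1 : HasDerivAt (fun u : ℝ => a * u) a u := by
      simpa using (hasDerivAt_id u).const_mul a
    have h2 : HasDerivAt (fun u : ℝ => 1 - u) (-1) u := by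
      simpa using (hasDerivAt_id u).const_sub 1
    have := (h1.div h2 h1u : HasDerivAt (fun u : ℝ => a * u / (1 - u)) _ u)
    refine this.congr_deriv ?_
    ring
  exact hd.hasDerivWithinAt

/-- Pointwise identity: the transformed integrand equals the beta integrand. -/
lemma transform_eq (ha : 0 < a) (u : ℝ) (hu : u ∈ Ioo (0:ℝ) 1) :
    |a / (1 - u) ^ 2| •
      ((((a * u / (1 - u) : ℝ)) : ℂ) ^ (-s) * ((a : ℂ) + ((a * u / (1 - u) : ℝ) : ℂ))⁻¹) =
    (a : ℂ) ^ (-s) * ((u : ℂ) ^ (-s) * ((1 - u : ℝ) : ℂ) ^ (s - 1)) := by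
  obtain ⟨hu0, hu1⟩ := hu
  have h1u : (0:ℝ) < 1 - u := by linarith
  have habs : |a / (1 - u) ^ 2| = a / (1 - u) ^ 2 :=
    abs_of_pos (div_pos ha (by positivity))
  have hUne : ((1 - u : ℝ) : ℂ) ≠ 0 := Complex.ofReal_ne_zero.2 h1u.ne'
  have hane : (a : ℂ) ≠ 0 := Complex.ofReal_ne_zero.2 ha.ne'
  have hsum : (a : ℂ) + ((a * u / (1 - u) : ℝ) : ℂ) = ((a / (1 - u) : ℝ) : ℂ) := by
    rw [← Complex.ofReal_add]
    congr 1
    field_simp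
    ring
  have harg : ((1 - u : ℝ) : ℂ).arg ≠ Real.pi := by
    rw [Complex.arg_ofReal_of_nonneg h1u.le]
    exact Real.pi_ne_zero.symm
  have hp1 : (((a * u / (1 - u) : ℝ)) : ℂ) ^ (-s)
      = (a : ℂ) ^ (-s) * (u : ℂ) ^ (-s) * (((1 - u : ℝ)) : ℂ) ^ s := by
    have e1 : (a * u / (1 - u) : ℝ) = (a * u) * (1 - u)⁻¹ := by ring
    rw [e1, Complex.ofReal_mul,
      mul_cpow_ofReal_nonneg (by positivity) (by positivity),
      Complex.ofReal_mul, mul_cpow_ofReal_nonneg ha.le hu0.le,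
      Complex.ofReal_inv, Complex.inv_cpow _ _ harg, ← Complex.cpow_neg, neg_neg]
  have hinv : (((a / (1 - u) : ℝ)) : ℂ)⁻¹ = ((1 - u : ℝ) : ℂ) * ((a : ℝ) : ℂ)⁻¹ := by
    rw [Complex.ofReal_div, inv_div, div_eq_mul_inv]
  have hsub : (((1 - u : ℝ)) : ℂ) ^ (s - 1) = (((1 - u : ℝ)) : ℂ) ^ s * (((1 - u : ℝ)) : ℂ)⁻¹ := by
    rw [Complex.cpow_sub _ _ hUne, Complex.cpow_one, div_eq_mul_inv]
  rw [hsum, hp1, hinv, hsub, habs, real_smul, Complex.ofReal_div, Complex.ofReal_pow]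
  generalize hVdef : ((1 - u : ℝ) : ℂ) = V at hUne ⊢
  generalize hAdef : ((a : ℝ) : ℂ) = A at hane ⊢
  field_simp

lemma beta_eval (h0 : 0 < s.re) (h1 : s.re < 1) :
    ∫ u in Ioo (0:ℝ) 1, (u : ℂ) ^ (-s) * ((1 - u : ℝ) : ℂ) ^ (s - 1)
      = (Real.pi : ℂ) / Complex.sin (Real.pi * s) := by
  have hu : 0 < (1 - s).re := by simp [Complex.sub_re]; linarith
  have key := Complex.Gamma_mul_Gamma_eq_betaIntegral hu (by simpa using h0)
  rw [(by ring : (1 - s) + s = 1), Complex.Gamma_one, one_mul] at key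
  have hrefl := Complex.Gamma_mul_Gamma_one_sub s
  rw [mul_comm] at key
  rw [← hrefl, key, Complex.betaIntegral,
    intervalIntegral.integral_of_le (by norm_num : (0:ℝ) ≤ 1),
    ← MeasureTheory.integral_Ioc_eq_integral_Ioo]
  refine setIntegral_congr_fun measurableSet_Ioc (fun u hu => ?_)
  push_cast
  norm_num

/-- Integrability of the beta integrand on `Ioo 0 1`. -/
lemma beta_integrable (h0 : 0 < s.re) (h1 : s.re < 1) :
    IntegrableOn (fun u : ℝ => (a : ℂ) ^ (-s) * ((u : ℂ) ^ (-s) * ((1 - u : ℝ) : ℂ) ^ (s - 1)))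
      (Ioo (0:ℝ) 1) := by
  have hu : 0 < (1 - s).re := by simp [Complex.sub_re]; linarith
  have hb := Complex.betaIntegral_convergent hu (by simpa using h0)
  rw [intervalIntegrable_iff_integrableOn_Ioo_of_le (by norm_num : (0:ℝ) ≤ 1)] at hb
  refine (hb.congr_fun (fun u hu' => ?_) measurableSet_Ioo).const_mul _
  push_cast
  norm_num

/-- The key integral: `∫₀^∞ λ^{-s} (a+λ)⁻¹ dλ = a^{-s} π / sin (π s)`. -/
lemma key_integral (ha : 0 < a) (h0 : 0 < s.re) (h1 : s.re < 1) :
    ∫ l in Ioi (0:ℝ), (l : ℂ) ^ (-s) * ((a : ℂ) + (l : ℂ))⁻¹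
      = (a : ℂ) ^ (-s) * ((Real.pi : ℂ) / Complex.sin (Real.pi * s)) := by
  have h := integral_image_eq_integral_abs_deriv_smul measurableSet_Ioo (deriv_g ha) (inj_g ha)
    (fun l : ℝ => (l : ℂ) ^ (-s) * ((a : ℂ) + (l : ℂ))⁻¹)
  rw [image_g ha] at h
  rw [h, setIntegral_congr_fun measurableSet_Ioo (fun u hu => transform_eq ha u hu),
    MeasureTheory.integral_const_mul, beta_eval h0 h1]

lemma key_integrable (ha : 0 < a) (h0 : 0 < s.re) (h1 : s.re < 1) :
    IntegrableOn (fun l : ℝ => (l : ℂ) ^ (-s) * ((a : ℂ) + (l : ℂ))⁻¹) (Ioi (0:ℝ)) := by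
  have h := integrableOn_image_iff_integrableOn_abs_deriv_smul measurableSet_Ioo
    (deriv_g ha) (inj_g ha) (fun l : ℝ => (l : ℂ) ^ (-s) * ((a : ℂ) + (l : ℂ))⁻¹)
  rw [image_g ha] at h
  rw [h]
  exact (beta_integrable h0 h1).congr_fun (fun u hu => (transform_eq ha u hu).symm)
    measurableSet_Ioo

end Stmt1Aux

end

/- STATEMENT 1: For positive reals `x ≠ y` and complex `z` with `0 < Re z < 2`,
   `(sin(πz/2)/π) ∫₀^∞ λ^{-z/2}(x+λ)⁻¹(y+λ)⁻¹ dλ = -(x^{-z/2} - y^{-z/2})/(x - y)`. -/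
theorem stmt_1 (x y : ℝ) (hx : 0 < x) (hy : 0 < y) (hxy : x ≠ y)
    (z : ℂ) (h0 : 0 < z.re) (h2 : z.re < 2) :
    (Complex.sin (Real.pi * z / 2) / Real.pi) *
      ∫ l in Set.Ioi (0:ℝ), (l : ℂ) ^ (-z / 2) * ((x : ℂ) + l)⁻¹ * ((y : ℂ) + l)⁻¹ =
    -(((x : ℂ) ^ (-z / 2) - (y : ℂ) ^ (-z / 2)) / ((x : ℂ) - (y : ℂ))) := by
  have h2c : (2 : ℂ) = ((2 : ℝ) : ℂ) := by norm_num
  set s : ℂ := z / 2 with hs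
  have hsre : s.re = z.re / 2 := by rw [hs, h2c, Complex.div_ofReal_re]
  have hs0 : 0 < s.re := by rw [hsre]; linarith
  have hs1 : s.re < 1 := by rw [hsre]; linarith
  have hns : -z / 2 = -s := by rw [hs]; ring
  have hπ : (Real.pi : ℂ) ≠ 0 := Complex.ofReal_ne_zero.2 Real.pi_ne_zero
  have hsin : Complex.sin ((Real.pi : ℂ) * s) ≠ 0 := by
    rw [Complex.sin_ne_zero_iff]
    intro k hk
    have hsk : s = (k : ℂ) := by
      have h' : (Real.pi : ℂ) * s = (Real.pi : ℂ) * k := by rw [hk]; ring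
      exact mul_left_cancel₀ hπ h'
    have : s.re = (k : ℝ) := by rw [hsk]; simp
    rw [this] at hs0 hs1
    rcases le_or_gt k 0 with h | h
    · have : (k : ℝ) ≤ 0 := by exact_mod_cast h
      linarith
    · have : (1 : ℝ) ≤ (k : ℝ) := by exact_mod_cast h
      linarith
  have hyx : (y : ℂ) - (x : ℂ) ≠ 0 := by
    rw [← Complex.ofReal_sub]
    exact Complex.ofReal_ne_zero.2 (sub_ne_zero.2 (Ne.symm hxy))
  have hxyc : (x : ℂ) - (y : ℂ) ≠ 0 := by
    rw [← Complex.ofReal_sub]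
    exact Complex.ofReal_ne_zero.2 (sub_ne_zero.2 hxy)
  have hsplit : ∫ l in Set.Ioi (0:ℝ), (l : ℂ) ^ (-z / 2) * ((x : ℂ) + l)⁻¹ * ((y : ℂ) + l)⁻¹
      = ∫ l in Set.Ioi (0:ℝ), ((y : ℂ) - x)⁻¹ *
          ((l : ℂ) ^ (-s) * ((x : ℂ) + l)⁻¹ - (l : ℂ) ^ (-s) * ((y : ℂ) + l)⁻¹) := by
    refine setIntegral_congr_fun measurableSet_Ioi (fun l hl => ?_)
    have hl' : (0:ℝ) < l := hl
    have hxl : (x : ℂ) + l ≠ 0 := by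
      rw [← Complex.ofReal_add]
      exact Complex.ofReal_ne_zero.2 (by positivity)
    have hyl : (y : ℂ) + l ≠ 0 := by
      rw [← Complex.ofReal_add]
      exact Complex.ofReal_ne_zero.2 (by positivity)
    rw [hns]
    field_simp
    ring
  rw [hsplit, MeasureTheory.integral_const_mul,
    MeasureTheory.integral_sub (Stmt1Aux.key_integrable hx hs0 hs1)
      (Stmt1Aux.key_integrable hy hs0 hs1),
    Stmt1Aux.key_integral hx hs0 hs1, Stmt1Aux.key_integral hy hs0 hs1, hns]
  have hsin_eq : Complex.sin ((Real.pi : ℂ) * z / 2) = Complex.sin ((Real.pi : ℂ) * s) := by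
    rw [hs]; ring_nf
  rw [hsin_eq]
  field_simp
  ring
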